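/- Let A be an invertible complex n×n matrix with ‖I - A²‖ < 1 for a submultiplicative norm. Define X₀ = A and X_{k+1} = (1/2)X_k(3I - X_k²). Then ‖I - X_k²‖ ≤ ‖I - A²‖^{2^k} for all k ≥ 0; in particular X_k² → I. -/

import Mathlib

open Matrix Filter

theorem newton_schulz_quadratic_convergence {n : ℕ}
    (A : Matrix (Fin n) (Fin n) ℂ) [Invertible A]
    (N : Matrix (Fin n) (Fin n) ℂ → ℝ)
    (hN0 : ∀ M, 0 ≤ N M)
    (hNadd : ∀ M₁ M₂, N (M₁ + M₂) ≤ N M₁ + N M₂)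
    (hNsmul : ∀ (c : ℂ) M, N (c • M) = ‖c‖ * N M)
    (hNmul : ∀ M₁ M₂, N (M₁ * M₂) ≤ N M₁ * N M₂)
    (hNzero : ∀ M, N M = 0 ↔ M = 0)
    (hA : N (1 - A ^ 2) < 1)
    (X : ℕ → Matrix (Fin n) (Fin n) ℂ)
    (hX0 : X 0 = A)
    (hXs : ∀ k, X (k + 1) = ((1:ℂ)/2) • (X k * (3 - X k ^ 2))) :
    (∀ k, N (1 - X k ^ 2) ≤ N (1 - A ^ 2) ^ (2 ^ k))
    ∧ Tendsto (fun k => N (1 - X k ^ 2)) atTop (nhds 0) := by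
  set r := N (1 - A ^ 2) with hr
  have hr0 : 0 ≤ r := hN0 _
  -- algebraic identity via polynomial evaluation
  have key : ∀ k, 1 - X (k + 1) ^ 2
      = ((3:ℂ)/4) • (1 - X k ^ 2) ^ 2 + ((1:ℂ)/4) • (1 - X k ^ 2) ^ 3 := by
    intro k
    rw [hXs]
    have hpoly : (1 : Polynomial ℂ) - (((1:ℂ)/2) • (Polynomial.X * (3 - Polynomial.X ^ 2))) ^ 2
        = ((3:ℂ)/4) • (1 - Polynomial.X ^ 2) ^ 2 + ((1:ℂ)/4) • (1 - Polynomial.X ^ 2) ^ 3 := by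
      have e1 : Polynomial.C ((1:ℂ)/2) ^ 2 = Polynomial.C ((1:ℂ)/4) := by
        rw [← map_pow]; norm_num
      have e3 : Polynomial.C ((3:ℂ)/4) = 3 * Polynomial.C ((1:ℂ)/4) := by
        rw [(map_ofNat Polynomial.C 3).symm, ← _root_.map_mul]; norm_num
      have e4 : (4:Polynomial ℂ) * Polynomial.C ((1:ℂ)/4) = 1 := by
        rw [(map_ofNat Polynomial.C 4).symm, ← _root_.map_mul]; norm_num
      simp only [Polynomial.smul_eq_C_mul]
      linear_combination (-(Polynomial.X^2*(3-Polynomial.X^2)^2)) * e1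
        + (-(1-Polynomial.X^2)^2) * e3 + (-1 : Polynomial ℂ) * e4
    have h := congrArg (Polynomial.aeval (X k)) hpoly
    simpa [map_ofNat] using h
  -- norm recurrence
  have hstep : ∀ k, N (1 - X k ^ 2) ≤ 1 →
      N (1 - X (k + 1) ^ 2) ≤ N (1 - X k ^ 2) ^ 2 := by
    intro k hle
    set R := 1 - X k ^ 2 with hR
    have h2 : N (R ^ 2) ≤ N R ^ 2 := by
      rw [pow_two, pow_two]; exact hNmul R R
    have h3 : N (R ^ 3) ≤ N R ^ 3 := by
      rw [pow_succ']
      calc N (R * R ^ 2) ≤ N R * N (R ^ 2) := hNmul _ _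
        _ ≤ N R * N R ^ 2 := by
          exact mul_le_mul_of_nonneg_left h2 (hN0 R)
        _ = N R ^ 3 := by ring
    have hc3 : ‖((3:ℂ)/4)‖ = 3/4 := by
      rw [norm_div]; norm_num
    have hc1 : ‖((1:ℂ)/4)‖ = 1/4 := by
      rw [norm_div]; norm_num
    calc N (1 - X (k + 1) ^ 2)
        = N (((3:ℂ)/4) • R ^ 2 + ((1:ℂ)/4) • R ^ 3) := by rw [key k]
      _ ≤ N (((3:ℂ)/4) • R ^ 2) + N (((1:ℂ)/4) • R ^ 3) := hNadd _ _
      _ = (3/4) * N (R ^ 2) + (1/4) * N (R ^ 3) := by rw [hNsmul, hNsmul, hc3, hc1]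
      _ ≤ (3/4) * N R ^ 2 + (1/4) * N R ^ 3 := by nlinarith
      _ ≤ N R ^ 2 := by nlinarith [hN0 R]
  -- main bound by induction
  have main : ∀ k, N (1 - X k ^ 2) ≤ r ^ (2 ^ k) := by
    intro k
    induction k with
    | zero => simp [hX0, hr]
    | succ k ih =>
      have hle1 : N (1 - X k ^ 2) ≤ 1 :=
        ih.trans (pow_le_one₀ hr0 hA.le)
      calc N (1 - X (k + 1) ^ 2) ≤ N (1 - X k ^ 2) ^ 2 := hstep k hle1
        _ ≤ (r ^ (2 ^ k)) ^ 2 := pow_le_pow_left₀ (hN0 _) ih 2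
        _ = r ^ (2 ^ (k + 1)) := by rw [← pow_mul, pow_succ]
  refine ⟨main, ?_⟩
  have hlim : Tendsto (fun k => r ^ (2 ^ k)) atTop (nhds 0) :=
    (tendsto_pow_atTop_nhds_zero_of_lt_one hr0 hA).comp
      (tendsto_pow_atTop_atTop_of_one_lt (α := ℕ) one_lt_two)
  exact squeeze_zero (fun k => hN0 _) main hlim
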